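/- Let M be a von Neumann algebra and let a, b ∈ M with 0 ≤ a, b ≤ 1 be absolutely compatible. Then the range projection p₁ of a∘b commutes with a + b, i.e., p₁(a+b) = (a+b)p₁. -/

import Mathlib

open scoped NNReal


variable {H : Type*} [NormedAddCommGroup H] [InnerProductSpace ℂ H] [CompleteSpace H]

/-- The absolute value `|x| = (x* x)^(1/2)` of a bounded operator. -/
noncomputable def opAbs (x : H →L[ℂ] H) : H →L[ℂ] H := CFC.sqrt (star x * x)

/-- `p` is the range projection of `x` in the von Neumann algebra `M`: the smallest
projection in `M` satisfying `p x = x`. -/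
def IsRangeProjection (M : VonNeumannAlgebra H) (p x : H →L[ℂ] H) : Prop :=
  p ∈ M ∧ IsIdempotentElem p ∧ IsSelfAdjoint p ∧ p * x = x ∧
    ∀ q : H →L[ℂ] H, q ∈ M → IsIdempotentElem q → IsSelfAdjoint q → q * x = x → p ≤ q

section aux


set_option linter.unusedSectionVars false

lemma opAbs_commute (e : H →L[ℂ] H) (he : IsSelfAdjoint e) : e * opAbs e = opAbs e * e := by
  have h0 : (0 : H →L[ℂ] H) ≤ e * e := by simpa [he.star_eq] using star_mul_self_nonneg e
  have hgc : Continuous (fun x : ℝ => ((x.toNNReal.sqrt : ℝ≥0) : ℝ)) :=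
    NNReal.continuous_coe.comp (NNReal.sqrt.continuous.comp continuous_real_toNNReal)
  have h1 : opAbs e = cfc (fun x : ℝ => ((x.toNNReal.sqrt : ℝ≥0) : ℝ)) (e * e) := by
    unfold opAbs
    rw [he.star_eq, CFC.sqrt_eq_cfc, cfc_nnreal_eq_real _ _ h0]
  have h2 : e * e = cfc (fun x : ℝ => x * x) e := by
    rw [cfc_mul (fun x : ℝ => x) (fun x : ℝ => x) e, cfc_id' ℝ e]
  rw [h2] at h1
  rw [← cfc_comp' (fun x : ℝ => ((x.toNNReal.sqrt : ℝ≥0) : ℝ)) (fun x : ℝ => x * x) e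
    (hgc.continuousOn) (by fun_prop)] at h1
  have := cfc_commute_cfc (fun x : ℝ => x) (fun x : ℝ => ((((x * x)).toNNReal.sqrt : ℝ≥0) : ℝ)) e
  rw [cfc_id' ℝ e] at this
  rw [h1]
  exact this

lemma opAbs_mul_self (e : H →L[ℂ] H) (he : IsSelfAdjoint e) : opAbs e * opAbs e = e * e := by
  have h0 : (0 : H →L[ℂ] H) ≤ e * e := by simpa [he.star_eq] using star_mul_self_nonneg e
  unfold opAbs
  rw [he.star_eq]
  exact CFC.sqrt_mul_sqrt_self _ h0

variable (K : Submodule ℂ H) [CompleteSpace K]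

noncomputable def projL : H →L[ℂ] H := K.subtypeL ∘L K.orthogonalProjectionOnto

lemma projL_apply_mem (h : H) : projL K h ∈ K := (K.orthogonalProjectionOnto h).2

lemma projL_fix {w : H} (hw : w ∈ K) : projL K w = w :=
  Submodule.starProjection_eq_self_iff.mpr hw

lemma projL_isSelfAdjoint : IsSelfAdjoint (projL K) := isSelfAdjoint_starProjection K

lemma projL_idem : IsIdempotentElem (projL K) := by
  ext h
  exact projL_fix K (projL_apply_mem K h)

lemma projL_conj {z : H →L[ℂ] H} (hz : ∀ w ∈ K, z w ∈ K) :
    projL K * z * projL K = z * projL K := by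
  ext h
  exact projL_fix K (hz _ (projL_apply_mem K h))

lemma projL_comm {y : H →L[ℂ] H} (hy : ∀ w ∈ K, y w ∈ K)
    (hy' : ∀ w ∈ K, (star y) w ∈ K) : y * projL K = projL K * y := by
  have h1 := projL_conj K hy
  have h2 := projL_conj K hy'
  have h3 : projL K * y * projL K = projL K * y := by
    have := congrArg star h2
    simpa [star_mul, mul_assoc, (projL_isSelfAdjoint K).star_eq] using this
  rw [← h1, h3]

lemma proj_le {P q : H →L[ℂ] H} (hPi : IsIdempotentElem P) (hPs : IsSelfAdjoint P)
    (hqi : IsIdempotentElem q) (hqs : IsSelfAdjoint q) (hqP : q * P = P) : P ≤ q := by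
  have hPq : P * q = P := by
    have := congrArg star hqP
    rwa [star_mul, hPs.star_eq, hqs.star_eq] at this
  have expand : (q - P) * (q - P) = q * q - q * P - P * q + P * P := by noncomm_ring
  rw [hqi.eq, hPi.eq, hqP, hPq] at expand
  have key : q - P = star (q - P) * (q - P) := by
    rw [(hqs.sub hPs).star_eq, expand]
    abel
  have : (0 : H →L[ℂ] H) ≤ q - P := key ▸ star_mul_self_nonneg (q - P)
  exact sub_nonneg.mp this

end aux

/-- If `0 ≤ a, b ≤ 1` are absolutely compatible elements of a von Neumann algebra, then the
range projection of `a ∘ b` commutes with `a + b`. -/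
theorem stmt5 (M : VonNeumannAlgebra H) (a b p₁ : H →L[ℂ] H)
    (haM : a ∈ M) (hbM : b ∈ M)
    (ha0 : 0 ≤ a) (ha1 : a ≤ 1) (hb0 : 0 ≤ b) (hb1 : b ≤ 1)
    (hAC : opAbs (a - b) + opAbs (1 - a - b) = 1)
    (hp₁ : IsRangeProjection M p₁ ((2 : ℂ)⁻¹ • (a * b + b * a))) :
    p₁ * (a + b) = (a + b) * p₁ := by
  obtain ⟨hp₁M, hp₁i, hp₁s, hp₁x, hp₁min⟩ := hp₁
  set x : H →L[ℂ] H := (2 : ℂ)⁻¹ • (a * b + b * a) with hx_def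
  have hsa : IsSelfAdjoint a := .of_nonneg ha0
  have hsb : IsSelfAdjoint b := .of_nonneg hb0
  -- Step 1: (a+b) commutes with x.
  have hsx : (a + b) * x = x * (a + b) := by
    set d : H →L[ℂ] H := a - b with hd_def
    set e : H →L[ℂ] H := 1 - a - b with he_def
    have hd : IsSelfAdjoint d := hsa.sub hsb
    have he : IsSelfAdjoint e := ((IsSelfAdjoint.one (H →L[ℂ] H)).sub hsa).sub hsb
    set u : H →L[ℂ] H := opAbs d with hu_def
    set v : H →L[ℂ] H := opAbs e with hv_def
    have hu2 : u * u = d * d := opAbs_mul_self d hd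
    have hv2 : v * v = e * e := opAbs_mul_self e he
    have hev : e * v = v * e := opAbs_commute e he
    have hu' : u = 1 - v := eq_sub_of_add_eq hAC
    have key : v + v = 1 + e * e - d * d := by
      have h3 : (1 - v) * (1 - v) = d * d := by rw [← hu']; exact hu2
      have h4 : 1 - v - v + v * v = d * d := by rw [← h3]; noncomm_ring
      rw [hv2] at h4
      rw [← h4]
      abel
    have h5 : e * (1 + e * e - d * d) = (1 + e * e - d * d) * e := by
      rw [← key, mul_add, add_mul, hev]
    have hede : e * (d * d) = (d * d) * e := by
      have h6 : e * (d * d) - (d * d) * e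
          = (1 + e * e - d * d) * e - e * (1 + e * e - d * d) := by noncomm_ring
      rw [h5, sub_self] at h6
      exact sub_eq_zero.mp h6
    have hsd : (a + b) * (d * d) = (d * d) * (a + b) := by
      have h7 : (a + b) * (d * d) - (d * d) * (a + b)
          = (d * d) * e - e * (d * d) := by rw [he_def, hd_def]; noncomm_ring
      rw [← hede, sub_self] at h7
      exact sub_eq_zero.mp h7
    have hcc : (a + b) * ((a * b + b * a) + (a * b + b * a))
        = ((a * b + b * a) + (a * b + b * a)) * (a + b) := by
      have h8 : (a + b) * ((a * b + b * a) + (a * b + b * a))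
          - ((a * b + b * a) + (a * b + b * a)) * (a + b)
          = (d * d) * (a + b) - (a + b) * (d * d) := by rw [hd_def]; noncomm_ring
      rw [← hsd, sub_self] at h8
      exact sub_eq_zero.mp h8
    have hc : (a + b) * (a * b + b * a) = (a * b + b * a) * (a + b) := by
      rw [mul_add, add_mul] at hcc
      have h9 : (2 : ℂ) • ((a + b) * (a * b + b * a))
          = (2 : ℂ) • ((a * b + b * a) * (a + b)) := by
        rw [two_smul, two_smul]
        exact hcc
      exact smul_right_injective _ (two_ne_zero) h9
    rw [hx_def, mul_smul_comm, smul_mul_assoc, hc]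
  -- x is in M
  have hxM : x ∈ M := by
    have hcM : a * b + b * a ∈ M := add_mem (mul_mem haM hbM) (mul_mem hbM haM)
    have : ((2 : ℂ)⁻¹ • (1 : H →L[ℂ] H)) * (a * b + b * a) = x := by
      rw [smul_mul_assoc, one_mul]
    rw [← this]
    refine mul_mem ?_ hcM
    have h1M : (1 : H →L[ℂ] H) ∈ M := one_mem M.toStarSubalgebra
    exact M.toStarSubalgebra.smul_mem h1M _
  -- the closed subspace
  set K : Submodule ℂ H := (LinearMap.range (x : H →ₗ[ℂ] H)).topologicalClosure with hK_def
  haveI : CompleteSpace K := (Submodule.isClosed_topologicalClosure _).completeSpace_coe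
  have hrange_sub : ∀ h : H, x h ∈ K :=
    fun h => (LinearMap.range (x : H →ₗ[ℂ] H)).le_topologicalClosure (LinearMap.mem_range_self (x : H →ₗ[ℂ] H) h)
  -- invariance from commutation
  have hinv : ∀ z : H →L[ℂ] H, z * x = x * z → ∀ w ∈ K, z w ∈ K := by
    intro z hz w hw
    have hmaps : Set.MapsTo z (LinearMap.range (x : H →ₗ[ℂ] H) : Set H) (K : Set H) := by
      rintro _ ⟨h, rfl⟩
      have : z (x h) = x (z h) := by
        calc z (x h) = (z * x) h := rfl
          _ = (x * z) h := by rw [hz]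
          _ = x (z h) := rfl
      change z (x h) ∈ (K : Set H)
      rw [this]
      exact hrange_sub (z h)
    have hw' : w ∈ closure (LinearMap.range (x : H →ₗ[ℂ] H) : Set H) := hw
    have := map_mem_closure z.continuous hw' hmaps
    rwa [(Submodule.isClosed_topologicalClosure (LinearMap.range (x : H →ₗ[ℂ] H))).closure_eq] at this
  -- P = projection onto K
  set P : H →L[ℂ] H := projL K with hP_def
  have hPx : P * x = x := by
    ext h
    exact projL_fix K (hrange_sub h)
  -- P is in M
  have hPM : P ∈ M := by
    rw [← M.commutant_commutant]
    rw [VonNeumannAlgebra.mem_commutant_iff]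
    intro g hg
    have hgx : g * x = x * g := by
      have := (VonNeumannAlgebra.mem_commutant_iff.mp hg) x hxM
      exact this.symm
    have hgx' : star g * x = x * star g := by
      have hgM' : star g ∈ M.commutant := star_mem hg
      have := (VonNeumannAlgebra.mem_commutant_iff.mp hgM') x hxM
      exact this.symm
    exact projL_comm K (hinv g hgx) (hinv (star g) hgx')
  -- p₁ ≤ P
  have hle1 : p₁ ≤ P := hp₁min P hPM (projL_idem K) (projL_isSelfAdjoint K) hPx
  -- P ≤ p₁
  have hp₁P : p₁ * P = P := by
    ext h
    have hfix : ∀ w ∈ K, p₁ w = w := by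
      intro w hw
      have hclosed : IsClosed {h : H | p₁ h = h} :=
        isClosed_eq p₁.continuous continuous_id
      have hsub : (LinearMap.range (x : H →ₗ[ℂ] H) : Set H) ⊆ {h : H | p₁ h = h} := by
        rintro _ ⟨h, rfl⟩
        calc p₁ (x h) = (p₁ * x) h := rfl
          _ = x h := by rw [hp₁x]
      have hw' : w ∈ closure (LinearMap.range (x : H →ₗ[ℂ] H) : Set H) := hw
      exact closure_minimal hsub hclosed hw'
    exact hfix _ (projL_apply_mem K h)
  have hle2 : P ≤ p₁ := proj_le (projL_idem K) (projL_isSelfAdjoint K) hp₁i hp₁s hp₁P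
  have hPp₁ : p₁ = P := le_antisymm hle1 hle2
  -- transfer commutation
  have hs_self : star (a + b) = a + b := (hsa.add hsb).star_eq
  have hcomm : (a + b) * P = P * (a + b) :=
    projL_comm K (hinv (a + b) hsx) (by rw [hs_self]; exact hinv (a + b) hsx)
  rw [hPp₁, hcomm]
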